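/- Let p be a probability distribution on a finite set with all p_i > 0 and not uniform. For temperature 𝒯 > 0, define the tempered distribution p_i^{(𝒯)} = p_i^{1/𝒯} / ∑_j p_j^{1/𝒯}. Then the Shannon entropy H(p^{(𝒯)}) is strictly increasing in 𝒯; moreover H(p^{(𝒯)}) → log V as 𝒯 → ∞ (where V is the support size). -/

import Mathlib

open Filter Finset

namespace TemperedAux

noncomputable section

variable {V : ℕ} (p : Fin V → ℝ)

def Z (β : ℝ) : ℝ := ∑ i, Real.exp (Real.log (p i) * β)
def A (β : ℝ) : ℝ := ∑ i, Real.log (p i) * Real.exp (Real.log (p i) * β)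
def B (β : ℝ) : ℝ := ∑ i, (Real.log (p i))^2 * Real.exp (Real.log (p i) * β)
def F (β : ℝ) : ℝ := Real.log (Z p β) - β * A p β / Z p β

lemma Z_pos (hV : 0 < V) (β : ℝ) : 0 < Z p β := by
  have : Nonempty (Fin V) := ⟨⟨0, hV⟩⟩
  exact Finset.sum_pos (fun i _ => Real.exp_pos _) Finset.univ_nonempty

lemma hasDerivAt_Z (β : ℝ) : HasDerivAt (Z p) (A p β) β := by
  apply HasDerivAt.fun_sum
  intro i _
  have h : HasDerivAt (fun b : ℝ => Real.log (p i) * b) (Real.log (p i)) β := by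
    simpa using (hasDerivAt_id β).const_mul (Real.log (p i))
  simpa [mul_comm] using h.exp

lemma hasDerivAt_A (β : ℝ) : HasDerivAt (A p) (B p β) β := by
  apply HasDerivAt.fun_sum
  intro i _
  have h : HasDerivAt (fun b : ℝ => Real.log (p i) * b) (Real.log (p i)) β := by
    simpa using (hasDerivAt_id β).const_mul (Real.log (p i))
  have := (h.exp).const_mul (Real.log (p i))
  simpa [pow_two, mul_comm, mul_assoc, mul_left_comm] using this

lemma hasDerivAt_F (hV : 0 < V) (β : ℝ) :
    HasDerivAt (F p) (-(β * ((B p β * Z p β - A p β ^ 2) / Z p β ^ 2))) β := by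
  have hZ := Z_pos p hV β
  have h1 : HasDerivAt (fun b => Real.log (Z p b)) (A p β / Z p β) β :=
    (hasDerivAt_Z p β).log hZ.ne'
  have h2 : HasDerivAt (fun b => b * A p b) (A p β + β * B p β) β := by
    simpa using (hasDerivAt_id β).fun_mul (hasDerivAt_A p β)
  have h3 : HasDerivAt (fun b => b * A p b / Z p b)
      (((A p β + β * B p β) * Z p β - β * A p β * A p β) / Z p β ^ 2) β :=
    h2.div (hasDerivAt_Z p β) hZ.ne'
  have h4 : HasDerivAt (F p) _ β := h1.fun_sub h3
  convert h4 using 1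
  field_simp
  ring

lemma var_pos (hp : ∀ i, 0 < p i) (hnonunif : ∃ i j, p i ≠ p j) (β : ℝ) :
    0 < B p β * Z p β - A p β ^ 2 := by
  set ℓ : Fin V → ℝ := fun i => Real.log (p i) with hℓ
  set e : Fin V → ℝ := fun i => Real.exp (ℓ i * β) with he
  have key : B p β * Z p β - A p β ^ 2
      = (1/2) * ∑ i, ∑ j, e i * e j * (ℓ i - ℓ j) ^ 2 := by
    have inner : ∀ i : Fin V, ∑ j, e i * e j * (ℓ i - ℓ j) ^ 2
        = e i * ℓ i ^ 2 * Z p β - 2 * (e i * ℓ i) * A p β + e i * B p β := by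
      intro i
      calc ∑ j, e i * e j * (ℓ i - ℓ j) ^ 2
          = ∑ j, (e i * ℓ i ^ 2 * Real.exp (ℓ j * β)
              - 2 * (e i * ℓ i) * (ℓ j * Real.exp (ℓ j * β))
              + e i * (ℓ j ^ 2 * Real.exp (ℓ j * β))) :=
            Finset.sum_congr rfl (fun j _ => by simp only [he]; ring)
        _ = _ := by
            rw [Finset.sum_add_distrib, Finset.sum_sub_distrib, ← Finset.mul_sum,
              ← Finset.mul_sum, ← Finset.mul_sum]
            rfl
    rw [Finset.sum_congr rfl (fun i _ => inner i)]
    rw [Finset.sum_add_distrib, Finset.sum_sub_distrib, ← Finset.sum_mul, ← Finset.sum_mul,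
      ← Finset.sum_mul]
    have e1 : ∑ i, e i * ℓ i ^ 2 = B p β :=
      Finset.sum_congr rfl (fun i _ => by simp [he, hℓ, B]; ring)
    have e2 : ∑ i, 2 * (e i * ℓ i) = 2 * A p β := by
      rw [← Finset.mul_sum]
      congr 1
      exact Finset.sum_congr rfl (fun i _ => by simp [he, hℓ, A]; ring)
    have e3 : ∑ i, e i = Z p β := rfl
    rw [e1, e2, e3]
    ring
  rw [key]
  have hnn : ∀ i : Fin V, (0:ℝ) ≤ ∑ j, e i * e j * (ℓ i - ℓ j) ^ 2 := fun i =>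
    Finset.sum_nonneg fun j _ => by positivity
  obtain ⟨i₀, j₀, hij⟩ := hnonunif
  have hℓij : ℓ i₀ ≠ ℓ j₀ := fun h => hij (by
    have := congrArg Real.exp h
    rwa [Real.exp_log (hp i₀), Real.exp_log (hp j₀)] at this)
  have hpos : 0 < ∑ j, e i₀ * e j * (ℓ i₀ - ℓ j) ^ 2 := by
    apply Finset.sum_pos' (fun j _ => by positivity) ⟨j₀, Finset.mem_univ _, ?_⟩
    have h2 : (0:ℝ) < (ℓ i₀ - ℓ j₀) ^ 2 :=
      pow_two_pos_of_ne_zero (sub_ne_zero.mpr hℓij)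
    exact mul_pos (mul_pos (Real.exp_pos _) (Real.exp_pos _)) h2
  have hs := Finset.sum_pos' (fun i _ => hnn i) ⟨i₀, Finset.mem_univ _, hpos⟩
  linarith


lemma F_strictAntiOn (hV : 0 < V) (hp : ∀ i, 0 < p i) (hnonunif : ∃ i j, p i ≠ p j) :
    StrictAntiOn (F p) (Set.Ioi (0:ℝ)) := by
  apply strictAntiOn_of_deriv_neg (convex_Ioi 0)
  · exact fun x _ => (hasDerivAt_F p hV x).continuousAt.continuousWithinAt
  · intro x hx
    rw [interior_Ioi] at hx
    rw [(hasDerivAt_F p hV x).deriv]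
    have h1 := var_pos p hp hnonunif x
    have h2 := Z_pos p hV x
    have : 0 < x * ((B p x * Z p x - A p x ^ 2) / Z p x ^ 2) := by
      apply mul_pos hx
      positivity
    linarith

lemma entropy_eq (hV : 0 < V) (hp : ∀ i, 0 < p i) (β : ℝ) :
    -∑ i, (p i ^ β / ∑ j, p j ^ β) * Real.log (p i ^ β / ∑ j, p j ^ β) = F p β := by
  have hrw : ∀ i, p i ^ β = Real.exp (Real.log (p i) * β) := fun i =>
    Real.rpow_def_of_pos (hp i) β
  have hZ : ∑ j, p j ^ β = Z p β := Finset.sum_congr rfl fun j _ => hrw j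
  have hZpos := Z_pos p hV β
  have hlog : ∀ i, Real.log (p i ^ β / Z p β)
      = Real.log (p i) * β - Real.log (Z p β) := by
    intro i
    rw [hrw i, Real.log_div (Real.exp_ne_zero _) hZpos.ne', Real.log_exp]
  have hterm : ∀ i : Fin V, (p i ^ β / ∑ j, p j ^ β) * Real.log (p i ^ β / ∑ j, p j ^ β)
      = (β / Z p β) * (Real.log (p i) * Real.exp (Real.log (p i) * β))
        - (Real.log (Z p β) / Z p β) * Real.exp (Real.log (p i) * β) := by
    intro i
    rw [hZ, hlog i, hrw i]
    ring
  rw [Finset.sum_congr rfl fun i _ => hterm i, Finset.sum_sub_distrib,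
    ← Finset.mul_sum, ← Finset.mul_sum]
  have hA : (∑ i, Real.log (p i) * Real.exp (Real.log (p i) * β)) = A p β := rfl
  have hZ' : (∑ i, Real.exp (Real.log (p i) * β)) = Z p β := rfl
  rw [hA, hZ', F]
  field_simp
  ring

end

end TemperedAux

/-- For a strictly positive, non-uniform distribution `p` on a finite set of
size `V`, the Shannon entropy of the tempered distribution
`p_i^{(𝒯)} = p_i^{1/𝒯} / ∑_j p_j^{1/𝒯}` is strictly increasing in the
temperature `𝒯 > 0`, and tends to `log V` as `𝒯 → ∞`. -/
theorem tempered_entropy_strictMono_and_limit (V : ℕ) (hV : 0 < V)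
    (p : Fin V → ℝ) (hp : ∀ i, 0 < p i) (hsum : ∑ i, p i = 1)
    (hnonunif : ∃ i j, p i ≠ p j) :
    StrictMonoOn
      (fun 𝒯 : ℝ =>
        -∑ i, (p i ^ (1 / 𝒯) / ∑ j, p j ^ (1 / 𝒯)) *
          Real.log (p i ^ (1 / 𝒯) / ∑ j, p j ^ (1 / 𝒯)))
      (Set.Ioi (0 : ℝ)) ∧
    Tendsto
      (fun 𝒯 : ℝ =>
        -∑ i, (p i ^ (1 / 𝒯) / ∑ j, p j ^ (1 / 𝒯)) *
          Real.log (p i ^ (1 / 𝒯) / ∑ j, p j ^ (1 / 𝒯)))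
      atTop (nhds (Real.log V)) := by
  have hfun : (fun 𝒯 : ℝ =>
        -∑ i, (p i ^ (1 / 𝒯) / ∑ j, p j ^ (1 / 𝒯)) *
          Real.log (p i ^ (1 / 𝒯) / ∑ j, p j ^ (1 / 𝒯)))
      = fun 𝒯 : ℝ => TemperedAux.F p (1 / 𝒯) :=
    funext fun 𝒯 => TemperedAux.entropy_eq p hV hp (1 / 𝒯)
  rw [hfun]
  constructor
  · intro a ha b hb hab
    have ha' : (0:ℝ) < a := ha
    have hb' : (0:ℝ) < b := hb
    exact TemperedAux.F_strictAntiOn p hV hp hnonunif (Set.mem_Ioi.mpr (by positivity))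
      (Set.mem_Ioi.mpr (by positivity)) (one_div_lt_one_div_of_lt ha' hab)
  · have hcont : ContinuousAt (TemperedAux.F p) 0 := (TemperedAux.hasDerivAt_F p hV 0).continuousAt
    have hlim : Tendsto (fun 𝒯 : ℝ => 1 / 𝒯) atTop (nhds 0) := by
      simpa [one_div] using tendsto_inv_atTop_zero
    have := hcont.tendsto.comp hlim
    have hF0 : TemperedAux.F p 0 = Real.log V := by
      simp [TemperedAux.F, TemperedAux.Z, Finset.card_univ]
    rw [hF0] at this
    exact this
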